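/- Let p ≥ 5 be prime, β a primitive root modulo p, and u an integer. The set of x ∈ {1, ..., p-1} with x ≡ β^(x-1+u) (mod p) (the fixed points of the shifted exponential Welch Costas array) is a Sidon set in {1,...,p-1}: if x₁, x₂, x₃, x₄ are such fixed points with x₁ - x₂ = x₃ - x₄ ≠ 0, then x₁ = x₃ and x₂ = x₄. -/
import Mathlib


/-- The fixed points of a shifted exponential Welch Costas array form a Sidon set. -/
theorem stmt_7 (p : ℕ) [Fact p.Prime] (hp5 : 5 ≤ p) (β : (ZMod p)ˣ)
    (hβ : orderOf β = p - 1) (u : ℤ) (x₁ x₂ x₃ x₄ : ℕ)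
    (h₁ : x₁ ∈ Finset.Icc 1 (p - 1)) (h₂ : x₂ ∈ Finset.Icc 1 (p - 1))
    (h₃ : x₃ ∈ Finset.Icc 1 (p - 1)) (h₄ : x₄ ∈ Finset.Icc 1 (p - 1))
    (f₁ : (x₁ : ZMod p) = ((β ^ ((x₁ : ℤ) - 1 + u) : (ZMod p)ˣ) : ZMod p))
    (f₂ : (x₂ : ZMod p) = ((β ^ ((x₂ : ℤ) - 1 + u) : (ZMod p)ˣ) : ZMod p))
    (f₃ : (x₃ : ZMod p) = ((β ^ ((x₃ : ℤ) - 1 + u) : (ZMod p)ˣ) : ZMod p))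
    (f₄ : (x₄ : ZMod p) = ((β ^ ((x₄ : ℤ) - 1 + u) : (ZMod p)ˣ) : ZMod p))
    (hdiff : (x₁ : ℤ) - x₂ = (x₃ : ℤ) - x₄) (hne : (x₁ : ℤ) - x₂ ≠ 0) :
    x₁ = x₃ ∧ x₂ = x₄ := by
  simp only [Finset.mem_Icc] at h₁ h₂ h₃ h₄
  have hplt : p - 1 < p := Nat.sub_lt (by omega) one_pos
  -- natCast of each xᵢ determines xᵢ
  have hinj : ∀ a b : ℕ, a ≤ p - 1 → b ≤ p - 1 → (a : ZMod p) = (b : ZMod p) → a = b := by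
    intro a b ha hb hab
    have := congrArg ZMod.val hab
    rwa [ZMod.val_natCast_of_lt (by omega), ZMod.val_natCast_of_lt (by omega)] at this
  -- product identity
  have hprod : (x₁ : ZMod p) * x₄ = (x₂ : ZMod p) * x₃ := by
    rw [f₁, f₂, f₃, f₄, ← Units.val_mul, ← Units.val_mul, ← zpow_add, ← zpow_add]
    have hexp : ((x₁ : ℤ) - 1 + u) + ((x₄ : ℤ) - 1 + u)
        = ((x₂ : ℤ) - 1 + u) + ((x₃ : ℤ) - 1 + u) := by omega
    rw [hexp]
  -- sum identity
  have hsum : (x₁ : ZMod p) + x₄ = (x₂ : ZMod p) + x₃ := by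
    have : ((x₁ : ℤ) + x₄ : ℤ) = ((x₂ : ℤ) + x₃ : ℤ) := by omega
    have := congrArg (fun z : ℤ => (z : ZMod p)) this
    push_cast at this
    exact this
  have hx12 : (x₁ : ZMod p) ≠ (x₂ : ZMod p) := by
    intro h
    exact hne (by have := hinj x₁ x₂ h₁.2 h₂.2 h; omega)
  have hkey : ((x₁ : ZMod p) - x₂) * ((x₁ : ZMod p) - x₃) = 0 := by
    linear_combination (x₁ : ZMod p) * hsum - hprod
  rcases mul_eq_zero.mp hkey with h | h
  · exact absurd (by linear_combination h) hx12
  · have hx13 : (x₁ : ZMod p) = x₃ := by linear_combination h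
    have e13 := hinj x₁ x₃ h₁.2 h₃.2 hx13
    exact ⟨e13, by omega⟩
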